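/- Reverse Young inequality in Minkowski space with Legendre equality: let p, q be nonzero real numbers with p < 1 and 1/p + 1/q = 1. For all future-directed timelike vectors v, w ∈ ℝ^{n+1} one has η(v,w) ≥ |v|^p/p + |w|^q/q, and equality holds if and only if w = |v|^(p−2) · v. -/

import Mathlib

/-- The Minkowski bilinear form on `ℝ^{n+1}`. -/
def minkEta (n : ℕ) (v w : Fin (n + 1) → ℝ) : ℝ :=
  v 0 * w 0 - ∑ i : Fin n, v i.succ * w i.succ

/-- The Lorentzian norm `|v| = √(η(v,v))` of a (causal) vector. -/
noncomputable def minkNorm (n : ℕ) (v : Fin (n + 1) → ℝ) : ℝ :=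
  Real.sqrt (minkEta n v v)

lemma mink_comm (n : ℕ) (v w : Fin (n+1) → ℝ) : minkEta n v w = minkEta n w v := by
  unfold minkEta
  rw [mul_comm]
  congr 1
  exact Finset.sum_congr rfl fun i _ => mul_comm _ _

lemma mink_smul_right (n : ℕ) (c : ℝ) (v w : Fin (n+1) → ℝ) :
    minkEta n v (c • w) = c * minkEta n v w := by
  unfold minkEta
  simp only [Pi.smul_apply, smul_eq_mul]
  rw [mul_sub, Finset.mul_sum]
  congr 1
  · ring
  · exact Finset.sum_congr rfl fun i _ => by ring

lemma mink_sub_smul_right (n : ℕ) (c : ℝ) (v w : Fin (n+1) → ℝ) :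
    minkEta n v (w - c • v) = minkEta n v w - c * minkEta n v v := by
  unfold minkEta
  simp only [Pi.sub_apply, Pi.smul_apply, smul_eq_mul]
  have hs : ∑ i : Fin n, v i.succ * (w i.succ - c * v i.succ)
      = ∑ i : Fin n, (v i.succ * w i.succ - c * (v i.succ * v i.succ)) :=
    Finset.sum_congr rfl fun i _ => by ring
  rw [hs, Finset.sum_sub_distrib, ← Finset.mul_sum]
  ring

lemma mink_sub_smul_self (n : ℕ) (c : ℝ) (v w : Fin (n+1) → ℝ) :
    minkEta n (w - c • v) (w - c • v)
      = minkEta n w w - 2*c*minkEta n v w + c^2 * minkEta n v v := by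
  unfold minkEta
  simp only [Pi.sub_apply, Pi.smul_apply, smul_eq_mul]
  have hs : ∑ i : Fin n, (w i.succ - c * v i.succ) * (w i.succ - c * v i.succ)
      = ∑ i : Fin n, (w i.succ * w i.succ - 2*c*(v i.succ * w i.succ)
          + c^2 * (v i.succ * v i.succ)) :=
    Finset.sum_congr rfl fun i _ => by ring
  rw [hs, Finset.sum_add_distrib, Finset.sum_sub_distrib, ← Finset.mul_sum, ← Finset.mul_sum]
  ring

lemma mink_smul_self (n : ℕ) (c : ℝ) (v : Fin (n+1) → ℝ) :
    minkEta n (c • v) (c • v) = c^2 * minkEta n v v := by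
  rw [mink_comm, mink_smul_right, mink_comm, mink_smul_right]; ring

lemma mink_ortho_neg (n : ℕ) (v u : Fin (n+1) → ℝ) (hv0 : 0 < v 0)
    (hv : 0 < minkEta n v v) (h : minkEta n v u = 0) :
    minkEta n u u ≤ 0 ∧ (minkEta n u u = 0 ↔ u = 0) := by
  unfold minkEta at hv h ⊢
  set Svv := ∑ i : Fin n, v i.succ * v i.succ with hSvv_def
  set Suu := ∑ i : Fin n, u i.succ * u i.succ with hSuu_def
  set Svu := ∑ i : Fin n, v i.succ * u i.succ with hSvu_def
  have hCS : Svu^2 ≤ Svv * Suu := by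
    have := Finset.sum_mul_sq_le_sq_mul_sq Finset.univ
      (fun i : Fin n => v i.succ) (fun i : Fin n => u i.succ)
    calc Svu^2 ≤ (∑ i : Fin n, (v i.succ)^2) * ∑ i : Fin n, (u i.succ)^2 := this
      _ = Svv * Suu := by
          rw [hSvv_def, hSuu_def]
          congr 1 <;> exact Finset.sum_congr rfl fun i _ => sq _
  have hSuu0 : 0 ≤ Suu := Finset.sum_nonneg fun i _ => mul_self_nonneg _
  have hv' : Svv < v 0 * v 0 := by linarith
  have heq : v 0 * u 0 = Svu := by linarith
  have hsq : (v 0 * u 0)^2 = Svu^2 := by rw [heq]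
  have key : v 0 * v 0 * (u 0 * u 0 - Suu) ≤ 0 := by
    nlinarith [hCS, hsq, mul_nonneg (sub_nonneg.mpr hv'.le) hSuu0]
  constructor
  · have key2 : v 0 * v 0 * (u 0 * u 0 - Suu) ≤ v 0 * v 0 * 0 := by linarith
    linarith [le_of_mul_le_mul_left key2 (mul_pos hv0 hv0)]
  constructor
  · intro hz
    have hz' : Suu = u 0 * u 0 := by linarith
    have e1 : v 0 * v 0 * Suu = Svu^2 := by rw [hz', ← heq]; ring
    have hSuu_le : Suu ≤ 0 := by nlinarith [hCS, e1, hv', hSuu0]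
    have hSuu_eq : Suu = 0 := le_antisymm hSuu_le hSuu0
    have hterm : ∀ i ∈ Finset.univ, u (Fin.succ i) * u (Fin.succ i) = 0 := by
      rw [← Finset.sum_eq_zero_iff_of_nonneg (fun i _ => mul_self_nonneg _)]
      exact hSuu_eq
    have hu0 : u 0 = 0 := by
      have : u 0 * u 0 = 0 := by rw [← hz', hSuu_eq]
      exact mul_self_eq_zero.mp this
    funext i
    refine Fin.cases ?_ ?_ i
    · exact hu0
    · intro j
      exact mul_self_eq_zero.mp (hterm j (Finset.mem_univ j))
  · intro h0
    subst h0
    simp [hSuu_def]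

lemma mink_pos (n : ℕ) (v w : Fin (n+1) → ℝ) (hv0 : 0 < v 0) (hv : 0 < minkEta n v v)
    (hw0 : 0 < w 0) (hw : 0 < minkEta n w w) : 0 < minkEta n v w := by
  unfold minkEta at hv hw ⊢
  set Svv := ∑ i : Fin n, v i.succ * v i.succ with hSvv_def
  set Sww := ∑ i : Fin n, w i.succ * w i.succ with hSww_def
  set Svw := ∑ i : Fin n, v i.succ * w i.succ with hSvw_def
  have hCS : Svw^2 ≤ Svv * Sww := by
    have := Finset.sum_mul_sq_le_sq_mul_sq Finset.univ
      (fun i : Fin n => v i.succ) (fun i : Fin n => w i.succ)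
    calc Svw^2 ≤ (∑ i : Fin n, (v i.succ)^2) * ∑ i : Fin n, (w i.succ)^2 := this
      _ = Svv * Sww := by
          rw [hSvv_def, hSww_def]
          congr 1 <;> exact Finset.sum_congr rfl fun i _ => sq _
  have hSvv0 : 0 ≤ Svv := Finset.sum_nonneg fun i _ => mul_self_nonneg _
  have hSww0 : 0 ≤ Sww := Finset.sum_nonneg fun i _ => mul_self_nonneg _
  nlinarith [hCS, hSvv0, hSww0, mul_pos hv0 hw0, mul_pos hv0 hv0, mul_pos hw0 hw0]

lemma mink_revCS (n : ℕ) (v w : Fin (n+1) → ℝ) (hv0 : 0 < v 0) (hv : 0 < minkEta n v v)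
    (hw0 : 0 < w 0) (hw : 0 < minkEta n w w) :
    minkNorm n v * minkNorm n w ≤ minkEta n v w ∧
      (minkEta n v w = minkNorm n v * minkNorm n w ↔
        w = (minkEta n v w / minkEta n v v) • v) := by
  have hpos : 0 < minkEta n v w := mink_pos n v w hv0 hv hw0 hw
  set c := minkEta n v w / minkEta n v v with hc_def
  have hc : 0 < c := div_pos hpos hv
  have horth : minkEta n v (w - c • v) = 0 := by
    rw [mink_sub_smul_right, hc_def]
    field_simp
    ring
  have hdecomp : minkEta n (w - c • v) (w - c • v)
      = minkEta n w w - (minkEta n v w)^2 / minkEta n v v := by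
    rw [mink_sub_smul_self, hc_def]
    field_simp
    ring
  obtain ⟨hle, hiff⟩ := mink_ortho_neg n v (w - c • v) hv0 hv horth
  have hsq : minkEta n v v * minkEta n w w ≤ (minkEta n v w)^2 := by
    rw [hdecomp] at hle
    have h2 : minkEta n w w ≤ (minkEta n v w)^2 / minkEta n v v := by linarith
    have := (le_div_iff₀ hv).mp h2
    linarith [this]
  have h1 : minkNorm n v * minkNorm n w = Real.sqrt (minkEta n v v * minkEta n w w) :=
    (Real.sqrt_mul hv.le _).symm
  have h2 : Real.sqrt ((minkEta n v w)^2) = minkEta n v w := Real.sqrt_sq hpos.le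
  constructor
  · rw [h1, ← h2]
    exact Real.sqrt_le_sqrt hsq
  constructor
  · intro heq
    have hsq' : (minkEta n v w)^2 = minkEta n v v * minkEta n w w := by
      rw [heq, h1, Real.sq_sqrt (mul_nonneg hv.le hw.le)]
    have hzero : minkEta n (w - c • v) (w - c • v) = 0 := by
      rw [hdecomp, hsq', mul_comm, mul_div_assoc, div_self hv.ne', mul_one, sub_self]
    exact sub_eq_zero.mp (hiff.mp hzero)
  · intro hweq
    have hvw : minkEta n v w = c * minkEta n v v := by
      conv_lhs => rw [hweq, mink_smul_right]
    have hww : minkEta n w w = c^2 * minkEta n v v := by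
      rw [hweq, mink_smul_self]
    rw [minkNorm, minkNorm, hww, hvw, Real.sqrt_mul (sq_nonneg c), Real.sqrt_sq hc.le]
    rw [← mul_assoc, mul_comm (Real.sqrt (minkEta n v v)) c, mul_assoc,
      Real.mul_self_sqrt hv.le]

lemma young_rev {a b p q : ℝ} (ha : 0 < a) (hb : 0 < b) (hp : 0 < p) (hp1 : p < 1)
    (hq0 : q ≠ 0) (hpq : 1/p + 1/q = 1) :
    a ^ p / p + b ^ q / q ≤ a * b ∧ (a * b = a ^ p / p + b ^ q / q ↔ b ^ q = a ^ p) := by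
  have hs : 1 < 1/p := one_lt_one_div hp hp1
  have hap : 0 < a ^ p := Real.rpow_pos_of_pos ha p
  have hbq : 0 < b ^ q := Real.rpow_pos_of_pos hb q
  set x := a ^ p / b ^ q with hx_def
  have hx0 : 0 < x := div_pos hap hbq
  have hpq' : p + q = p * q := by
    field_simp at hpq
    linarith
  -- key multiplicative identity
  have e1 : (a ^ p) ^ (1/p) = a := by
    rw [← Real.rpow_mul ha.le, mul_one_div_cancel hp.ne', Real.rpow_one]
  have hexp : q - q * (1/p) = 1 := by
    field_simp
    linarith
  have key : b ^ q * x ^ (1/p) = a * b := by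
    calc b ^ q * x ^ (1/p)
        = a * (b ^ q / (b ^ q) ^ (1/p)) := by
          rw [hx_def, Real.div_rpow hap.le hbq.le, e1]; ring
      _ = a * (b ^ q / b ^ (q * (1/p))) := by rw [← Real.rpow_mul hb.le]
      _ = a * b ^ (q - q * (1/p)) := by rw [← Real.rpow_sub hb]
      _ = a * b := by rw [hexp, Real.rpow_one]
  have lhs_eq : a ^ p / p + b ^ q / q = b ^ q * (1 + (1/p) * (x - 1)) := by
    have h1q : 1/q = 1 - 1/p := by linarith
    have hb2 : b ^ q / q = b ^ q * (1 - 1/p) := by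
      rw [div_eq_mul_one_div, h1q]
    rw [hb2, hx_def]
    field_simp
    ring
  have hxm1 : (-1 : ℝ) ≤ x - 1 := by linarith
  constructor
  · have bern : 1 + (1/p) * (x - 1) ≤ (1 + (x - 1)) ^ (1/p) :=
      one_add_mul_self_le_rpow_one_add hxm1 hs.le
    have : (1 : ℝ) + (x - 1) = x := by ring
    rw [this] at bern
    calc a ^ p / p + b ^ q / q = b ^ q * (1 + (1/p) * (x - 1)) := lhs_eq
      _ ≤ b ^ q * x ^ (1/p) := mul_le_mul_of_nonneg_left bern hbq.le
      _ = a * b := key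
  constructor
  · intro heq
    by_contra hne
    have hx1 : x - 1 ≠ 0 := by
      intro hz
      apply hne
      have : x = 1 := by linarith
      rw [hx_def, div_eq_one_iff_eq hbq.ne'] at this
      exact this.symm
    have bern : 1 + (1/p) * (x - 1) < (1 + (x - 1)) ^ (1/p) :=
      one_add_mul_self_lt_rpow_one_add hxm1 hx1 hs
    have : (1 : ℝ) + (x - 1) = x := by ring
    rw [this] at bern
    have : a ^ p / p + b ^ q / q < a * b := by
      calc a ^ p / p + b ^ q / q = b ^ q * (1 + (1/p) * (x - 1)) := lhs_eq
        _ < b ^ q * x ^ (1/p) := (mul_lt_mul_iff_right₀ hbq).mpr bern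
        _ = a * b := key
    linarith
  · intro heq
    have hx1 : x = 1 := by rw [hx_def, ← heq, div_self hbq.ne']
    rw [lhs_eq, hx1, ← key, hx1, Real.one_rpow]
    ring

/-- Reverse Young inequality in Minkowski space with Legendre equality: for conjugate
nonzero exponents `p, q < 1` and future-directed timelike `v, w`,
`η(v,w) ≥ |v|^p/p + |w|^q/q`, with equality iff `w = |v|^(p-2) • v`. -/
theorem minkowski_reverse_young (n : ℕ) (hn : 1 ≤ n) (p q : ℝ)
    (hp0 : p ≠ 0) (hq0 : q ≠ 0) (hp1 : p < 1) (hq1 : q < 1) (hpq : 1 / p + 1 / q = 1)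
    (v w : Fin (n + 1) → ℝ)
    (hv0 : 0 < v 0) (hv : 0 < minkEta n v v)
    (hw0 : 0 < w 0) (hw : 0 < minkEta n w w) :
    minkEta n v w ≥ minkNorm n v ^ p / p + minkNorm n w ^ q / q ∧
      (minkEta n v w = minkNorm n v ^ p / p + minkNorm n w ^ q / q ↔
        w = minkNorm n v ^ (p - 2) • v) := by
  have ha : 0 < minkNorm n v := Real.sqrt_pos.mpr hv
  have hb : 0 < minkNorm n w := Real.sqrt_pos.mpr hw
  set a := minkNorm n v with ha_def
  set b := minkNorm n w with hb_def
  have hpq' : p + q = p * q := by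
    have h := hpq
    field_simp at h
    linarith
  obtain ⟨hCSle, hCSiff⟩ := mink_revCS n v w hv0 hv hw0 hw
  have hYoung : a ^ p / p + b ^ q / q ≤ a * b ∧
      (a * b = a ^ p / p + b ^ q / q ↔ b ^ q = a ^ p) := by
    rcases lt_or_gt_of_ne hp0 with hpneg | hppos
    · have hqpos : 0 < q := by
        have h1 : 1/p < 0 := one_div_neg.mpr hpneg
        have h2 : 0 < 1/q := by linarith
        exact one_div_pos.mp h2
      obtain ⟨h1, h2⟩ := young_rev hb ha hqpos hq1 hp0 (by linarith : 1/q + 1/p = 1)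
      have hcomm : a * b = b * a := mul_comm a b
      constructor
      · linarith [h1]
      constructor
      · intro h
        have : b * a = b ^ q / q + a ^ p / p := by linarith
        exact (h2.mp this).symm
      · intro h
        have := h2.mpr h.symm
        linarith
    · exact young_rev ha hb hppos hp1 hq0 hpq
  refine ⟨le_trans hYoung.1 hCSle, ?_, ?_⟩
  · -- equality → w = a^(p-2) • v
    intro heq
    have hab : a * b = a ^ p / p + b ^ q / q :=
      le_antisymm (heq ▸ hCSle) hYoung.1
    have hbqap : b ^ q = a ^ p := hYoung.2.mp hab
    have h2 : minkEta n v w = a * b := heq.trans hab.symm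
    have hwv : w = (minkEta n v w / minkEta n v v) • v := hCSiff.mp h2
    set c := minkEta n v w / minkEta n v v with hc_def
    have hc : 0 < c := div_pos (mink_pos n v w hv0 hv hw0 hw) hv
    have hb_eq : b = c * a := by
      rw [hb_def, minkNorm]
      conv_lhs => rw [hwv, mink_smul_self]
      rw [Real.sqrt_mul (sq_nonneg c), Real.sqrt_sq hc.le]
      rfl
    have hcq : c ^ q = a ^ (p - q) := by
      have h3 : (c * a) ^ q = a ^ p := by rw [← hb_eq]; exact hbqap
      rw [Real.mul_rpow hc.le ha.le] at h3
      have haq : (0:ℝ) < a ^ q := Real.rpow_pos_of_pos ha q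
      calc c ^ q = c ^ q * a ^ q / a ^ q := by field_simp
        _ = a ^ p / a ^ q := by rw [h3]
        _ = a ^ (p - q) := (Real.rpow_sub ha p q).symm
    have hcval : c = a ^ (p - 2) := by
      have h4 : (c ^ q) ^ (1/q) = c := by
        rw [← Real.rpow_mul hc.le, mul_one_div_cancel hq0, Real.rpow_one]
      have h5 : (a ^ (p - q)) ^ (1/q) = a ^ (p - 2) := by
        rw [← Real.rpow_mul ha.le]
        congr 1
        field_simp
        linear_combination hpq'
      rw [← h4, hcq, h5]
    rw [hwv, hcval]
  · -- w = a^(p-2) • v → equality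
    intro hwv
    have hc2 : 0 < a ^ (p - 2) := Real.rpow_pos_of_pos ha _
    have hvv_eq : minkEta n v v = a ^ (2:ℝ) := by
      rw [show ((2:ℝ)) = ((2:ℕ):ℝ) by norm_num, Real.rpow_natCast, ha_def, minkNorm,
        Real.sq_sqrt hv.le]
    have hvw_eq : minkEta n v w = a ^ p := by
      rw [hwv, mink_smul_right, hvv_eq, ← Real.rpow_add ha]
      norm_num
    have hmul : a ^ (p-2) * a = a ^ (p-1) := by
      have h6 := Real.rpow_add ha (p-2) 1
      rw [Real.rpow_one] at h6
      calc a ^ (p-2) * a = a ^ (p-2+1) := h6.symm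
        _ = a ^ (p-1) := by congr 1; ring
    have hb_eq : b = a ^ (p - 1) := by
      calc b = Real.sqrt ((a ^ (p-2))^2 * minkEta n v v) := by
              rw [hb_def, minkNorm, hwv, mink_smul_self]
        _ = a ^ (p-2) * Real.sqrt (minkEta n v v) := by
              rw [Real.sqrt_mul (sq_nonneg _), Real.sqrt_sq hc2.le]
        _ = a ^ (p-2) * a := rfl
        _ = a ^ (p-1) := hmul
    have hbq_eq : b ^ q = a ^ p := by
      rw [hb_eq, ← Real.rpow_mul ha.le]
      congr 1
      linear_combination -hpq'
    rw [hvw_eq, hbq_eq]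
    have : a ^ p / p + a ^ p / q = a ^ p * (1/p + 1/q) := by ring
    rw [this, hpq, mul_one]
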